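/- Let 3/4 < p < 1. Then the series ∑_{k=n+1}^∞ a_k⁴ converges for every n, and n·(1/s_n⁴)·∑_{k=n+1}^∞ a_k⁴ → (4p−3)²/(8p−5) as n → ∞; in particular (1/s_n⁴)·∑_{k=n+1}^∞ a_k⁴ → 0. -/

import Mathlib

open Real Filter

/-- `a p n = Γ(2p)·Γ(n)/Γ(n+2p−1)`. -/
noncomputable def a (p : ℝ) (n : ℕ) : ℝ :=
  Real.Gamma (2*p) * Real.Gamma n / Real.Gamma ((n:ℝ) + 2*p - 1)

/-- `s p n = (Γ(2p)/√(4p−3))·n^{3/2−2p}`. -/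
noncomputable def s (p : ℝ) (n : ℕ) : ℝ :=
  Real.Gamma (2*p) / Real.sqrt (4*p - 3) * (n:ℝ) ^ ((3:ℝ)/2 - 2*p)

lemma mvt_rpow {β x : ℝ} (hβ : 1 < β) (hx : 1 ≤ x) :
    (β-1) * (x+1) ^ (-β) ≤ x ^ (1-β) - (x+1) ^ (1-β) ∧
    x ^ (1-β) - (x+1) ^ (1-β) ≤ (β-1) * x ^ (-β) := by
  have hx0 : (0:ℝ) < x := lt_of_lt_of_le one_pos hx
  have hlt : x < x + 1 := by linarith
  have hcont : ContinuousOn (fun t : ℝ => t ^ (1-β)) (Set.Icc x (x+1)) := by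
    intro t ht
    exact (Real.continuousAt_rpow_const t (1-β) (Or.inl (by nlinarith [ht.1]))).continuousWithinAt
  have hderiv : ∀ t ∈ Set.Ioo x (x+1),
      HasDerivAt (fun t : ℝ => t ^ (1-β)) ((1-β) * t ^ (1-β-1)) t := by
    intro t ht
    exact Real.hasDerivAt_rpow_const (Or.inl (by nlinarith [ht.1]))
  obtain ⟨c, hc, hc'⟩ := exists_hasDerivAt_eq_slope (fun t : ℝ => t ^ (1-β))
    (fun t => (1-β) * t ^ (1-β-1)) hlt hcont hderiv
  have hxc : x < c := hc.1
  have hcx : c < x + 1 := hc.2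
  have hkey : x ^ (1-β) - (x+1) ^ (1-β) = (β-1) * c ^ (-β) := by
    have : (1-β) * c ^ (1-β-1) = ((x+1) ^ (1-β) - x ^ (1-β)) / (x + 1 - x) := hc'
    have h2 : (1-β-1) = -β := by ring
    rw [h2] at this
    have h3 : x + 1 - x = 1 := by ring
    rw [h3, div_one] at this
    linarith [this]
  constructor
  · rw [hkey]
    have : (x+1) ^ (-β) ≤ c ^ (-β) :=
      Real.rpow_le_rpow_of_nonpos (by linarith) (le_of_lt hcx) (by linarith)
    nlinarith [this]
  · rw [hkey]
    have : c ^ (-β) ≤ x ^ (-β) :=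
      Real.rpow_le_rpow_of_nonpos hx0 (le_of_lt hxc) (by linarith)
    nlinarith [this]

lemma telescope_rpow {β c : ℝ} (hβ : 1 < β) (hc : 1 ≤ c) :
    HasSum (fun k : ℕ => ((c+k) ^ (1-β) - (c+k+1) ^ (1-β)) / (β-1)) (c ^ (1-β) / (β-1)) := by
  have hc0 : (0:ℝ) < c := lt_of_lt_of_le one_pos hc
  set g : ℕ → ℝ := fun k => (c+k) ^ (1-β) / (β-1) with hg
  have hnn : ∀ k : ℕ, 0 ≤ ((c+k) ^ (1-β) - (c+k+1) ^ (1-β)) / (β-1) := by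
    intro k
    apply div_nonneg _ (by linarith)
    have : (c+k+1) ^ (1-β) ≤ (c+k) ^ (1-β) :=
      Real.rpow_le_rpow_of_nonpos (by positivity) (by linarith) (by linarith)
    linarith
  rw [hasSum_iff_tendsto_nat_of_nonneg hnn]
  have heq : ∀ n : ℕ, ∑ i ∈ Finset.range n, ((c+i) ^ (1-β) - (c+i+1) ^ (1-β)) / (β-1)
      = g 0 - g n := by
    intro n
    rw [← Finset.sum_range_sub' g n]
    apply Finset.sum_congr rfl
    intro i _
    simp only [hg]
    push_cast
    ring
  simp only [heq]
  have h0 : g 0 = c ^ (1-β) / (β-1) := by simp [hg]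
  rw [h0]
  have : Tendsto g atTop (nhds 0) := by
    have h1 : Tendsto (fun k : ℕ => c + (k:ℝ)) atTop atTop :=
      tendsto_atTop_add_const_left _ _ tendsto_natCast_atTop_atTop
    have h2 : Tendsto (fun x : ℝ => x ^ (-(β-1))) atTop (nhds 0) :=
      tendsto_rpow_neg_atTop (by linarith)
    have h3 : Tendsto (fun k : ℕ => (c + (k:ℝ)) ^ (1-β)) atTop (nhds 0) := by
      have h4 : (1-β) = -(β-1) := by ring
      rw [h4]
      exact h2.comp h1
    simpa [hg] using h3.div_const (β-1)
  have := this.const_sub (c ^ (1-β) / (β-1))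
  simpa using this

lemma tail_summable {β : ℝ} (hβ : 1 < β) (n : ℕ) :
    Summable (fun k : ℕ => ((n:ℝ)+1+k) ^ (-β)) := by
  have h : Summable (fun m : ℕ => ((m:ℝ)) ^ (-β)) :=
    Real.summable_nat_rpow.2 (by linarith)
  have h2 := h.comp_injective (add_right_injective (n+1))
  apply h2.congr
  intro k
  simp only [Function.comp_apply]
  push_cast
  ring_nf

lemma tail_bounds {β : ℝ} (hβ : 1 < β) (n : ℕ) (hn : 1 ≤ n) :
    ((n:ℝ)+1) ^ (1-β) / (β-1) ≤ (∑' k : ℕ, ((n:ℝ)+1+k) ^ (-β)) ∧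
    (∑' k : ℕ, ((n:ℝ)+1+k) ^ (-β)) ≤ (n:ℝ) ^ (1-β) / (β-1) := by
  have hn1 : (1:ℝ) ≤ (n:ℝ) := by exact_mod_cast hn
  have hsum := tail_summable hβ n
  constructor
  · -- lower bound: telescope with c = n+1
    have ht := telescope_rpow hβ (c := (n:ℝ)+1) (by linarith)
    rw [← ht.tsum_eq]
    apply Summable.tsum_le_tsum _ ht.summable hsum
    intro k
    have h := (mvt_rpow hβ (x := (n:ℝ)+1+k) (by have h0 : (0:ℝ) ≤ k := Nat.cast_nonneg k; linarith)).2
    rw [div_le_iff₀ (by linarith)]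
    calc ((n:ℝ)+1+k) ^ (1-β) - ((n:ℝ)+1+k+1) ^ (1-β) ≤ (β-1) * ((n:ℝ)+1+k) ^ (-β) := h
      _ = ((n:ℝ)+1+k) ^ (-β) * (β-1) := by ring
  · -- upper bound: telescope with c = n
    have ht := telescope_rpow hβ (c := (n:ℝ)) hn1
    rw [← ht.tsum_eq]
    apply Summable.tsum_le_tsum _ hsum ht.summable
    intro k
    have h := (mvt_rpow hβ (x := (n:ℝ)+k) (by have h0 : (0:ℝ) ≤ k := Nat.cast_nonneg k; linarith)).1
    rw [le_div_iff₀ (by linarith)]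
    have he : (n:ℝ)+k+1 = (n:ℝ)+1+k := by ring
    calc ((n:ℝ)+1+k) ^ (-β) * (β-1) = (β-1) * ((n:ℝ)+k+1) ^ (-β) := by rw [he]; ring
      _ ≤ ((n:ℝ)+k) ^ (1-β) - ((n:ℝ)+k+1) ^ (1-β) := h

lemma gautschi {p : ℝ} (hp : 3/4 < p) (hp' : p < 1) (k : ℕ) (hk : 1 ≤ k) :
    Real.Gamma (2*p) * (k:ℝ) ^ (1-2*p) ≤ a p k ∧
    a p k ≤ Real.Gamma (2*p) * ((k:ℝ)+1) ^ (2-2*p) / k := by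
  have hk1 : (1:ℝ) ≤ (k:ℝ) := by exact_mod_cast hk
  have hk0 : (0:ℝ) < (k:ℝ) := by linarith
  have hΓk : 0 < Real.Gamma (k:ℝ) := Real.Gamma_pos_of_pos hk0
  have hs0 : (0:ℝ) < (k:ℝ) + 2*p - 1 := by linarith
  have hΓs : 0 < Real.Gamma ((k:ℝ) + 2*p - 1) := Real.Gamma_pos_of_pos hs0
  have hG : 0 < Real.Gamma (2*p) := Real.Gamma_pos_of_pos (by linarith)
  have hΓk1 : Real.Gamma ((k:ℝ)+1) = (k:ℝ) * Real.Gamma (k:ℝ) :=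
    Real.Gamma_add_one (ne_of_gt hk0)
  constructor
  · -- lower bound
    have h := Real.Gamma_mul_add_mul_le_rpow_Gamma_mul_rpow_Gamma
      (s := (k:ℝ)) (t := (k:ℝ)+1) (a := 2-2*p) (b := 2*p-1)
      hk0 (by linarith) (by linarith) (by linarith) (by ring)
    have harg : (2-2*p) * (k:ℝ) + (2*p-1) * ((k:ℝ)+1) = (k:ℝ) + 2*p - 1 := by ring
    rw [harg, hΓk1] at h
    have hrhs : Real.Gamma (k:ℝ) ^ (2-2*p) * ((k:ℝ) * Real.Gamma (k:ℝ)) ^ (2*p-1)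
        = Real.Gamma (k:ℝ) * (k:ℝ) ^ (2*p-1) := by
      rw [Real.mul_rpow (le_of_lt hk0) (le_of_lt hΓk), ← mul_assoc,
        mul_comm (Real.Gamma (k:ℝ) ^ (2-2*p)) ((k:ℝ) ^ (2*p-1)), mul_assoc,
        ← Real.rpow_add hΓk]
      norm_num
      ring
    rw [hrhs] at h
    -- h : Γ(k+2p-1) ≤ Γ(k) * k^(2p-1)
    have hd : Real.Gamma (2*p) * Real.Gamma (k:ℝ) / (Real.Gamma (k:ℝ) * (k:ℝ) ^ (2*p-1))
        ≤ a p k := by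
      unfold a
      exact div_le_div_of_nonneg_left (by positivity) hΓs h
    have he : Real.Gamma (2*p) * Real.Gamma (k:ℝ) / (Real.Gamma (k:ℝ) * (k:ℝ) ^ (2*p-1))
        = Real.Gamma (2*p) * (k:ℝ) ^ (1-2*p) := by
      rw [show (1-2*p) = -(2*p-1) by ring, Real.rpow_neg (le_of_lt hk0)]
      have hne : (k:ℝ) ^ (2*p-1) ≠ 0 := by positivity
      field_simp
    linarith [hd, he ▸ hd]
  · -- upper bound
    have h := Real.Gamma_mul_add_mul_le_rpow_Gamma_mul_rpow_Gamma
      (s := (k:ℝ)+2*p-1) (t := (k:ℝ)+2*p) (a := 2*p-1) (b := 2-2*p)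
      hs0 (by linarith) (by linarith) (by linarith) (by ring)
    have harg : (2*p-1) * ((k:ℝ)+2*p-1) + (2-2*p) * ((k:ℝ)+2*p) = (k:ℝ) + 1 := by ring
    rw [harg, hΓk1] at h
    have hΓt : Real.Gamma ((k:ℝ)+2*p) = ((k:ℝ)+2*p-1) * Real.Gamma ((k:ℝ)+2*p-1) := by
      have := Real.Gamma_add_one (ne_of_gt hs0)
      rw [show (k:ℝ)+2*p-1+1 = (k:ℝ)+2*p by ring] at this
      exact this
    rw [hΓt] at h
    have hrhs : Real.Gamma ((k:ℝ)+2*p-1) ^ (2*p-1)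
        * (((k:ℝ)+2*p-1) * Real.Gamma ((k:ℝ)+2*p-1)) ^ (2-2*p)
        = Real.Gamma ((k:ℝ)+2*p-1) * ((k:ℝ)+2*p-1) ^ (2-2*p) := by
      rw [Real.mul_rpow (le_of_lt hs0) (le_of_lt hΓs)]
      rw [mul_comm (((k:ℝ)+2*p-1) ^ (2-2*p)) (Real.Gamma ((k:ℝ)+2*p-1) ^ (2-2*p))]
      rw [← mul_assoc, ← Real.rpow_add hΓs]
      norm_num
    rw [hrhs] at h
    -- h : k * Γ(k) ≤ Γ(k+2p-1) * (k+2p-1)^(2-2p)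
    have h2 : ((k:ℝ)+2*p-1) ^ (2-2*p) ≤ ((k:ℝ)+1) ^ (2-2*p) :=
      Real.rpow_le_rpow (le_of_lt hs0) (by linarith) (by linarith)
    have h3 : (k:ℝ) * Real.Gamma (k:ℝ) ≤ Real.Gamma ((k:ℝ)+2*p-1) * ((k:ℝ)+1) ^ (2-2*p) := by
      calc (k:ℝ) * Real.Gamma (k:ℝ) ≤ Real.Gamma ((k:ℝ)+2*p-1) * ((k:ℝ)+2*p-1) ^ (2-2*p) := h
        _ ≤ Real.Gamma ((k:ℝ)+2*p-1) * ((k:ℝ)+1) ^ (2-2*p) := by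
            exact mul_le_mul_of_nonneg_left h2 (le_of_lt hΓs)
    unfold a
    rw [div_le_div_iff₀ hΓs hk0]
    nlinarith [h3, hG]

lemma pow4_bounds {p : ℝ} (hp : 3/4 < p) (hp' : p < 1) (k : ℕ) (hk : 1 ≤ k) :
    Real.Gamma (2*p) ^ 4 * (k:ℝ) ^ ((5:ℝ)-8*p-1) ≤ a p k ^ 4 ∧
    a p k ^ 4 ≤ Real.Gamma (2*p) ^ 4 * (1+1/(k:ℝ)) ^ (2:ℝ) * (k:ℝ) ^ ((5:ℝ)-8*p-1) := by
  have hk1 : (1:ℝ) ≤ (k:ℝ) := by exact_mod_cast hk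
  have hk0 : (0:ℝ) < (k:ℝ) := by linarith
  have hG : 0 < Real.Gamma (2*p) := Real.Gamma_pos_of_pos (by linarith)
  obtain ⟨hlo, hhi⟩ := gautschi hp hp' k hk
  have hbase : 0 ≤ Real.Gamma (2*p) * (k:ℝ) ^ (1-2*p) := by positivity
  constructor
  · have h := pow_le_pow_left₀ hbase hlo 4
    calc Real.Gamma (2*p) ^ 4 * (k:ℝ) ^ ((5:ℝ)-8*p-1)
        = (Real.Gamma (2*p) * (k:ℝ) ^ (1-2*p)) ^ 4 := by
          rw [mul_pow, ← Real.rpow_natCast ((k:ℝ) ^ (1-2*p)) 4, ← Real.rpow_mul hk0.le,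
            show (1-2*p)*((4:ℕ):ℝ) = (5:ℝ)-8*p-1 by push_cast; ring]
      _ ≤ a p k ^ 4 := h
  · have ha0 : 0 ≤ a p k := le_trans hbase hlo
    have h := pow_le_pow_left₀ ha0 hhi 4
    refine le_trans h ?_
    have hkp1 : (0:ℝ) < (k:ℝ)+1 := by linarith
    have e1 : ((k:ℝ)+1) ^ (2-2*p) = (k:ℝ) ^ (2-2*p) * (1+1/(k:ℝ)) ^ (2-2*p) := by
      rw [← Real.mul_rpow hk0.le (by positivity)]
      congr 1
      field_simp
    have e2 : (1+1/(k:ℝ)) ^ (2-2*p) ≤ (1+1/(k:ℝ)) ^ (2:ℝ) := by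
      apply Real.rpow_le_rpow_of_exponent_le _ (by linarith)
      have : (0:ℝ) < 1/(k:ℝ) := by positivity
      linarith
    have hrw : (Real.Gamma (2*p) * ((k:ℝ)+1) ^ (2-2*p) / (k:ℝ)) ^ 4
        = Real.Gamma (2*p) ^ 4 * (((k:ℝ)+1) ^ (2-2*p)) ^ 4 / (k:ℝ) ^ 4 := by
      rw [div_pow, mul_pow]
    rw [hrw, e1]
    have e3 : ((k:ℝ) ^ (2-2*p) * (1+1/(k:ℝ)) ^ (2-2*p)) ^ 4
        = (k:ℝ) ^ ((8:ℝ)-8*p) * ((1+1/(k:ℝ)) ^ (2-2*p)) ^ 4 := by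
      rw [mul_pow, ← Real.rpow_natCast ((k:ℝ) ^ (2-2*p)) 4, ← Real.rpow_mul hk0.le,
        show (2-2*p)*((4:ℕ):ℝ) = (8:ℝ)-8*p by push_cast; ring]
    rw [e3]
    have e4 : ((1+1/(k:ℝ)) ^ (2-2*p)) ^ 4 ≤ (1+1/(k:ℝ)) ^ (2:ℝ) := by
      rw [← Real.rpow_natCast ((1+1/(k:ℝ)) ^ (2-2*p)) 4, ← Real.rpow_mul (by positivity)]
      apply Real.rpow_le_rpow_of_exponent_le
      · have : (0:ℝ) < 1/(k:ℝ) := by positivity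
        linarith
      · push_cast
        linarith
    have e5 : (k:ℝ) ^ ((8:ℝ)-8*p) / (k:ℝ) ^ 4 = (k:ℝ) ^ ((5:ℝ)-8*p-1) := by
      rw [← Real.rpow_natCast (k:ℝ) 4, ← Real.rpow_sub hk0,
        show (8:ℝ)-8*p-((4:ℕ):ℝ) = (5:ℝ)-8*p-1 by push_cast; ring]
    have hkr : (0:ℝ) < (k:ℝ) ^ ((5:ℝ)-8*p-1) := by positivity
    calc Real.Gamma (2*p) ^ 4 * ((k:ℝ) ^ ((8:ℝ)-8*p) * ((1+1/(k:ℝ)) ^ (2-2*p)) ^ 4) / (k:ℝ) ^ 4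
        = Real.Gamma (2*p) ^ 4 * ((1+1/(k:ℝ)) ^ (2-2*p)) ^ 4 * ((k:ℝ) ^ ((8:ℝ)-8*p) / (k:ℝ) ^ 4) := by
          ring
      _ = Real.Gamma (2*p) ^ 4 * ((1+1/(k:ℝ)) ^ (2-2*p)) ^ 4 * (k:ℝ) ^ ((5:ℝ)-8*p-1) := by rw [e5]
      _ ≤ Real.Gamma (2*p) ^ 4 * (1+1/(k:ℝ)) ^ (2:ℝ) * (k:ℝ) ^ ((5:ℝ)-8*p-1) := by
          apply mul_le_mul_of_nonneg_right _ hkr.le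
          exact mul_le_mul_of_nonneg_left e4 (by positivity)

lemma a4_upper (n j : ℕ) (hp : 3/4 < p) (hp' : p < 1) :
    a p (n+1+j) ^ 4 ≤ Real.Gamma (2*p) ^ 4 * (1+1/((n:ℝ)+1)) ^ (2:ℝ)
      * ((n:ℝ)+1+j) ^ (-(8*p-4)) := by
  have h := (pow4_bounds hp hp' (n+1+j) (by omega)).2
  have hc : ((n+1+j:ℕ):ℝ) = (n:ℝ)+1+j := by push_cast; ring
  rw [hc] at h
  have hpos : (0:ℝ) < (n:ℝ)+1+j := by positivity
  refine le_trans h ?_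
  rw [show (5:ℝ)-8*p-1 = -(8*p-4) by ring]
  apply mul_le_mul_of_nonneg_right _ (by positivity)
  apply mul_le_mul_of_nonneg_left _ (by positivity)
  refine Real.rpow_le_rpow (by positivity) ?_ (by norm_num)
  have h1 : (1:ℝ) ≤ (n:ℝ)+1 := by have : (0:ℝ) ≤ (n:ℝ) := Nat.cast_nonneg n; linarith
  have h2 : (0:ℝ) ≤ (j:ℝ) := Nat.cast_nonneg j
  have := one_div_le_one_div_of_le (by linarith : (0:ℝ) < (n:ℝ)+1) (by linarith : (n:ℝ)+1 ≤ (n:ℝ)+1+j)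
  linarith

lemma a4_lower (n j : ℕ) (hp : 3/4 < p) (hp' : p < 1) :
    Real.Gamma (2*p) ^ 4 * ((n:ℝ)+1+j) ^ (-(8*p-4)) ≤ a p (n+1+j) ^ 4 := by
  have h := (pow4_bounds hp hp' (n+1+j) (by omega)).1
  have hc : ((n+1+j:ℕ):ℝ) = (n:ℝ)+1+j := by push_cast; ring
  rw [hc, show (5:ℝ)-8*p-1 = -(8*p-4) by ring] at h
  exact h

lemma a4_summable (hp : 3/4 < p) (hp' : p < 1) (n : ℕ) :
    Summable (fun j : ℕ => a p (n+1+j) ^ 4) := by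
  have hβ : (1:ℝ) < 8*p-4 := by linarith
  have hs := (tail_summable hβ n).mul_left
    (Real.Gamma (2*p) ^ 4 * (1+1/((n:ℝ)+1)) ^ (2:ℝ))
  apply Summable.of_nonneg_of_le (fun j => by positivity) (fun j => ?_) hs
  exact a4_upper n j hp hp'

lemma a4_tail_bounds (hp : 3/4 < p) (hp' : p < 1) (n : ℕ) (hn : 1 ≤ n) :
    Real.Gamma (2*p) ^ 4 * (((n:ℝ)+1) ^ ((5:ℝ)-8*p) / (8*p-5)) ≤ (∑' j : ℕ, a p (n+1+j) ^ 4) ∧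
    (∑' j : ℕ, a p (n+1+j) ^ 4) ≤ Real.Gamma (2*p) ^ 4 * (1+1/((n:ℝ)+1)) ^ (2:ℝ)
      * ((n:ℝ) ^ ((5:ℝ)-8*p) / (8*p-5)) := by
  have hβ : (1:ℝ) < 8*p-4 := by linarith
  have hts := tail_summable hβ n
  have htb := tail_bounds hβ n hn
  have hsa := a4_summable hp hp' n
  have he1 : (1:ℝ)-(8*p-4) = (5:ℝ)-8*p := by ring
  have he2 : (8*p-4)-1 = 8*p-5 := by ring
  constructor
  · have h1 : Real.Gamma (2*p) ^ 4 * (∑' k : ℕ, ((n:ℝ)+1+k) ^ (-(8*p-4)))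
        ≤ ∑' j : ℕ, a p (n+1+j) ^ 4 := by
      rw [← tsum_mul_left]
      exact Summable.tsum_le_tsum (fun j => a4_lower n j hp hp') (hts.mul_left _) hsa
    refine le_trans ?_ h1
    apply mul_le_mul_of_nonneg_left _ (by positivity)
    rw [← he1, ← he2]
    exact htb.1
  · have h1 : (∑' j : ℕ, a p (n+1+j) ^ 4)
        ≤ Real.Gamma (2*p) ^ 4 * (1+1/((n:ℝ)+1)) ^ (2:ℝ)
          * (∑' k : ℕ, ((n:ℝ)+1+k) ^ (-(8*p-4))) := by
      rw [← tsum_mul_left]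
      exact Summable.tsum_le_tsum (fun j => a4_upper n j hp hp') hsa (hts.mul_left _)
    refine le_trans h1 ?_
    apply mul_le_mul_of_nonneg_left _ (by positivity)
    rw [← he1, ← he2]
    exact htb.2


theorem stmt_14 (p : ℝ) (hp : 3/4 < p) (hp' : p < 1) :
    (∀ n : ℕ, Summable (fun k : ℕ => a p (n + 1 + k) ^ 4)) ∧
    Filter.Tendsto
      (fun n : ℕ => (n:ℝ) * (1 / (s p n)^4) * ∑' k : ℕ, a p (n + 1 + k) ^ 4)
      Filter.atTop (nhds ((4*p - 3)^2 / (8*p - 5))) ∧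
    Filter.Tendsto
      (fun n : ℕ => (1 / (s p n)^4) * ∑' k : ℕ, a p (n + 1 + k) ^ 4)
      Filter.atTop (nhds 0) := by
  have hG : 0 < Real.Gamma (2*p) := Real.Gamma_pos_of_pos (by linarith)
  set G : ℝ := Real.Gamma (2*p) with hGdef
  have hq : (0:ℝ) < 4*p-3 := by linarith
  have hr : (0:ℝ) < 8*p-5 := by linarith
  -- main limit
  have hmain : Filter.Tendsto
      (fun n : ℕ => (n:ℝ) * (1 / (s p n)^4) * ∑' k : ℕ, a p (n + 1 + k) ^ 4)
      Filter.atTop (nhds ((4*p - 3)^2 / (8*p - 5))) := by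
    -- limits of the bounding sequences
    have t1 : Tendsto (fun n : ℕ => 1 + 1/(n:ℝ)) atTop (nhds 1) := by
      simpa using (tendsto_one_div_atTop_nhds_zero_nat (𝕜 := ℝ)).const_add 1
    have t1' : Tendsto (fun n : ℕ => 1 + 1/((n:ℝ)+1)) atTop (nhds 1) := by
      simpa using (tendsto_one_div_add_atTop_nhds_zero_nat (𝕜 := ℝ)).const_add 1
    have hLo : Tendsto (fun n : ℕ => (4*p-3)^2/(8*p-5) * (1+1/(n:ℝ)) ^ ((5:ℝ)-8*p))
        atTop (nhds ((4*p-3)^2/(8*p-5))) := by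
      have t2 : Tendsto (fun n : ℕ => (1+1/(n:ℝ)) ^ ((5:ℝ)-8*p)) atTop (nhds 1) := by
        have hc := (Real.continuousAt_rpow_const 1 ((5:ℝ)-8*p) (Or.inl one_ne_zero)).tendsto
        have := hc.comp t1
        simpa [Real.one_rpow, Function.comp_def] using this
      simpa using t2.const_mul ((4*p-3)^2/(8*p-5))
    have hHi : Tendsto (fun n : ℕ => (4*p-3)^2/(8*p-5) * (1+1/((n:ℝ)+1)) ^ (2:ℝ))
        atTop (nhds ((4*p-3)^2/(8*p-5))) := by
      have t2 : Tendsto (fun n : ℕ => (1+1/((n:ℝ)+1)) ^ (2:ℝ)) atTop (nhds 1) := by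
        have hc := (Real.continuousAt_rpow_const 1 (2:ℝ) (Or.inl one_ne_zero)).tendsto
        have := hc.comp t1'
        simpa [Real.one_rpow, Function.comp_def] using this
      simpa using t2.const_mul ((4*p-3)^2/(8*p-5))
    apply tendsto_of_tendsto_of_tendsto_of_le_of_le' hLo hHi
    · -- lower bound eventually
      filter_upwards [eventually_ge_atTop 1] with n hn
      have hn0 : (0:ℝ) < (n:ℝ) := by exact_mod_cast hn
      have hs4 : (s p n)^4 = G^4/(4*p-3)^2 * (n:ℝ)^((6:ℝ)-8*p) := by
        show (G / Real.sqrt (4*p-3) * (n:ℝ)^((3:ℝ)/2-2*p))^4 = _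
        rw [mul_pow, div_pow,
          show Real.sqrt (4*p-3)^4 = ((Real.sqrt (4*p-3))^2)^2 by rw [← pow_mul],
          Real.sq_sqrt hq.le,
          ← Real.rpow_natCast ((n:ℝ)^((3:ℝ)/2-2*p)) 4, ← Real.rpow_mul hn0.le,
          show ((3:ℝ)/2-2*p)*((4:ℕ):ℝ) = (6:ℝ)-8*p by push_cast; ring]
      have hXinv : (n:ℝ)^((8:ℝ)*p-6) = ((n:ℝ)^((6:ℝ)-8*p))⁻¹ := by
        rw [show (8:ℝ)*p-6 = -((6:ℝ)-8*p) by ring, Real.rpow_neg hn0.le]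
      have hW : (0:ℝ) < (n:ℝ)^((6:ℝ)-8*p) := Real.rpow_pos_of_pos hn0 _
      have hinv : 1/(s p n)^4 = (4*p-3)^2/G^4 * (n:ℝ)^((8:ℝ)*p-6) := by
        rw [hs4, hXinv]
        field_simp
      have hT := (a4_tail_bounds hp hp' n hn).1
      have hc0 : 0 ≤ (n:ℝ) * (1/(s p n)^4) := by
        rw [hinv]; positivity
      have key : (n:ℝ) * (1/(s p n)^4) * (G^4 * (((n:ℝ)+1) ^ ((5:ℝ)-8*p) / (8*p-5)))
          = (4*p-3)^2/(8*p-5) * (1+1/(n:ℝ)) ^ ((5:ℝ)-8*p) := by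
        rw [hinv]
        have hY : (0:ℝ) < (n:ℝ)^((5:ℝ)-8*p) := Real.rpow_pos_of_pos hn0 _
        have hnX : (n:ℝ) * (n:ℝ)^((8:ℝ)*p-6) * (n:ℝ)^((5:ℝ)-8*p) = 1 := by
          nth_rewrite 1 [← Real.rpow_one (n:ℝ)]
          rw [← Real.rpow_add hn0, ← Real.rpow_add hn0,
            show (1:ℝ)+((8:ℝ)*p-6)+((5:ℝ)-8*p) = 0 by ring, Real.rpow_zero]
        have hdiv : (1+1/(n:ℝ)) = ((n:ℝ)+1)/(n:ℝ) := by field_simp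
        rw [hdiv, Real.div_rpow (by positivity) hn0.le]
        field_simp
        have e : (n:ℝ) * (n:ℝ)^(p*8-6) * (n:ℝ)^(5-p*8) = 1 := by
          rw [show p*8-6 = (8:ℝ)*p-6 by ring, show (5:ℝ)-p*8 = 5-8*p by ring]; exact hnX
        linear_combination e / (p*8-5)
      calc (4*p-3)^2/(8*p-5) * (1+1/(n:ℝ)) ^ ((5:ℝ)-8*p)
          = (n:ℝ) * (1/(s p n)^4) * (G^4 * (((n:ℝ)+1) ^ ((5:ℝ)-8*p) / (8*p-5))) := key.symm
        _ ≤ (n:ℝ) * (1/(s p n)^4) * ∑' k : ℕ, a p (n + 1 + k) ^ 4 :=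
            mul_le_mul_of_nonneg_left hT hc0
    · -- upper bound eventually
      filter_upwards [eventually_ge_atTop 1] with n hn
      have hn0 : (0:ℝ) < (n:ℝ) := by exact_mod_cast hn
      have hs4 : (s p n)^4 = G^4/(4*p-3)^2 * (n:ℝ)^((6:ℝ)-8*p) := by
        show (G / Real.sqrt (4*p-3) * (n:ℝ)^((3:ℝ)/2-2*p))^4 = _
        rw [mul_pow, div_pow,
          show Real.sqrt (4*p-3)^4 = ((Real.sqrt (4*p-3))^2)^2 by rw [← pow_mul],
          Real.sq_sqrt hq.le,
          ← Real.rpow_natCast ((n:ℝ)^((3:ℝ)/2-2*p)) 4, ← Real.rpow_mul hn0.le,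
          show ((3:ℝ)/2-2*p)*((4:ℕ):ℝ) = (6:ℝ)-8*p by push_cast; ring]
      have hXinv : (n:ℝ)^((8:ℝ)*p-6) = ((n:ℝ)^((6:ℝ)-8*p))⁻¹ := by
        rw [show (8:ℝ)*p-6 = -((6:ℝ)-8*p) by ring, Real.rpow_neg hn0.le]
      have hW : (0:ℝ) < (n:ℝ)^((6:ℝ)-8*p) := Real.rpow_pos_of_pos hn0 _
      have hinv : 1/(s p n)^4 = (4*p-3)^2/G^4 * (n:ℝ)^((8:ℝ)*p-6) := by
        rw [hs4, hXinv]
        field_simp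
      have hT := (a4_tail_bounds hp hp' n hn).2
      have hc0 : 0 ≤ (n:ℝ) * (1/(s p n)^4) := by
        rw [hinv]; positivity
      have key : (n:ℝ) * (1/(s p n)^4)
            * (G^4 * (1+1/((n:ℝ)+1)) ^ (2:ℝ) * ((n:ℝ) ^ ((5:ℝ)-8*p) / (8*p-5)))
          = (4*p-3)^2/(8*p-5) * (1+1/((n:ℝ)+1)) ^ (2:ℝ) := by
        rw [hinv]
        have hY : (0:ℝ) < (n:ℝ)^((5:ℝ)-8*p) := Real.rpow_pos_of_pos hn0 _
        have hnX : (n:ℝ) * (n:ℝ)^((8:ℝ)*p-6) * (n:ℝ)^((5:ℝ)-8*p) = 1 := by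
          nth_rewrite 1 [← Real.rpow_one (n:ℝ)]
          rw [← Real.rpow_add hn0, ← Real.rpow_add hn0,
            show (1:ℝ)+((8:ℝ)*p-6)+((5:ℝ)-8*p) = 0 by ring, Real.rpow_zero]
        have hC : (0:ℝ) < (1+1/((n:ℝ)+1)) ^ (2:ℝ) := by positivity
        field_simp
        have e : (n:ℝ) * (n:ℝ)^(p*8-6) * (n:ℝ)^(5-p*8) = 1 := by
          rw [show p*8-6 = (8:ℝ)*p-6 by ring, show (5:ℝ)-p*8 = 5-8*p by ring]; exact hnX
        linear_combination e / (p*8-5)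
      calc (n:ℝ) * (1/(s p n)^4) * ∑' k : ℕ, a p (n + 1 + k) ^ 4
          ≤ (n:ℝ) * (1/(s p n)^4)
            * (G^4 * (1+1/((n:ℝ)+1)) ^ (2:ℝ) * ((n:ℝ) ^ ((5:ℝ)-8*p) / (8*p-5))) :=
            mul_le_mul_of_nonneg_left hT hc0
        _ = (4*p-3)^2/(8*p-5) * (1+1/((n:ℝ)+1)) ^ (2:ℝ) := key
  refine ⟨fun n => a4_summable hp hp' n, hmain, ?_⟩
  -- third limit
  have h0 : Tendsto (fun n : ℕ => (1/(n:ℝ))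
      * ((n:ℝ) * (1 / (s p n)^4) * ∑' k : ℕ, a p (n + 1 + k) ^ 4)) atTop (nhds 0) := by
    have := tendsto_one_div_atTop_nhds_zero_nat.mul hmain
    simpa using this
  apply h0.congr'
  filter_upwards [eventually_ge_atTop 1] with n hn
  have hn0 : ((n:ℝ)) ≠ 0 := by positivity
  field_simp
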